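/- Let k, l, n be positive integers with k ≥ 2 and l > k satisfying (1 + k/(l-k))^n ≤ 2. Partition [l]^n into blocks R_x = {y ∈ [l]^n : (⌈y_1 k/l⌉, ..., ⌈y_n k/l⌉) = x} for x ∈ [k]^n. Then ⌊l/k⌋^n ≤ |R_x| ≤ ⌈l/k⌉^n for all x ∈ [k]^n, and for A ⊆ [k]^n with Ă = ∪_{x∈A} R_x ⊆ [l]^n, one has |∂Ă|/l^{n-1} ≤ 2 |∂A|/k^{n-1}, where ∂ denotes the edge-boundary in the respective ℓ¹-grid graphs G_{l,n} and G_{k,n}. -/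

import Mathlib

/-- The vertex set of the `ℓ¹`-grid `G_{k,n}`, as points of `ℕ^n` with coordinates in
`{1,…,k}`. -/
def gridPts (k n : ℕ) : Set (Fin n → ℕ) := {y | ∀ i, y i ∈ Finset.Icc 1 k}

/-- Adjacency in the `ℓ¹`-grid: differ by exactly `1` in exactly one coordinate. -/
def gridAdj (n : ℕ) (x y : Fin n → ℕ) : Prop :=
  ∃ j, (x j = y j + 1 ∨ y j = x j + 1) ∧ ∀ i, i ≠ j → x i = y i

/-- Size of the edge-boundary of `A` in the grid `G_{k,n}`: each boundary edge counted once,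
as the ordered pair (inside endpoint, outside endpoint in the grid). -/
noncomputable def gridBoundary (k n : ℕ) (A : Set (Fin n → ℕ)) : ℕ :=
  Set.ncard {p : (Fin n → ℕ) × (Fin n → ℕ) |
    p.1 ∈ A ∧ p.2 ∉ A ∧ p.2 ∈ gridPts k n ∧ gridAdj n p.1 p.2}

/-- The block `R_x ⊆ [l]^n` of the point `x ∈ [k]^n`: those `y ∈ [l]^n` with
`⌈y_i k / l⌉ = x_i` for all `i` (`⌈a/l⌉ = (a + l - 1)/l` in ℕ). -/
def block (k l n : ℕ) (x : Fin n → ℕ) : Set (Fin n → ℕ) :=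
  {y | y ∈ gridPts l n ∧ ∀ i, (y i * k + l - 1) / l = x i}

/-! ### Auxiliary lemmas -/

lemma ceilDiv_eq_iff {l a x : ℕ} (hl : 0 < l) (hx : 0 < x) :
    (a + l - 1) / l = x ↔ (x - 1) * l < a ∧ a ≤ x * l := by
  have hxl : l ≤ x * l := Nat.le_mul_of_pos_left l hx
  have hsub : (x - 1) * l = x * l - l := by rw [Nat.sub_mul, one_mul]
  constructor
  · intro h
    have h1 : x * l ≤ a + l - 1 := by
      rw [← h]; exact (Nat.le_div_iff_mul_le hl).mp le_rfl
    have h2 : a + l - 1 < (x + 1) * l := by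
      have : (a + l - 1) / l < x + 1 := by omega
      exact (Nat.div_lt_iff_lt_mul hl).mp this
    rw [add_mul, one_mul] at h2
    omega
  · rintro ⟨h1, h2⟩
    have h3 : x ≤ (a + l - 1) / l := by
      rw [Nat.le_div_iff_mul_le hl]; omega
    have h4 : (a + l - 1) / l < x + 1 := by
      rw [Nat.div_lt_iff_lt_mul hl, add_mul, one_mul]; omega
    omega

/-- The 1D fiber of `x` under the ceiling map. -/
def fib (k l x : ℕ) : Finset ℕ := Finset.Ioc ((x - 1) * l / k) (x * l / k)

lemma mem_fib_iff {k l x : ℕ} (hk : 0 < k) (hl : k < l) (hx1 : 1 ≤ x) (hxk : x ≤ k) (y : ℕ) :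
    y ∈ fib k l x ↔ y ∈ Finset.Icc 1 l ∧ (y * k + l - 1) / l = x := by
  have hl0 : 0 < l := lt_trans hk hl
  rw [fib, Finset.mem_Ioc, Finset.mem_Icc, ceilDiv_eq_iff hl0 hx1,
    Nat.div_lt_iff_lt_mul hk, Nat.le_div_iff_mul_le hk]
  constructor
  · rintro ⟨h1, h2⟩
    have hy1 : 1 ≤ y := by by_contra h; push_neg at h; interval_cases y; omega
    have hyl : y ≤ l := by
      have hxk' : x * l ≤ k * l := Nat.mul_le_mul_right l hxk
      nlinarith
    exact ⟨⟨hy1, hyl⟩, h1, h2⟩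
  · rintro ⟨_, h1, h2⟩; exact ⟨h1, h2⟩

lemma fib_card_lower {k l x : ℕ} (hk : 0 < k) (hx1 : 1 ≤ x) :
    l / k ≤ (fib k l x).card := by
  rw [fib, Nat.card_Ioc]
  have hxl : x * l = (x - 1) * l + l := by
    rw [Nat.sub_mul, one_mul]; have := Nat.le_mul_of_pos_left l hx1; omega
  rw [hxl]
  set a := (x - 1) * l
  have h1 : a / k + l / k ≤ (a + l) / k := by
    rw [Nat.le_div_iff_mul_le hk, add_mul]
    exact Nat.add_le_add (Nat.div_mul_le_self a k) (Nat.div_mul_le_self l k)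
  exact Nat.le_sub_of_add_le (by linarith)

lemma fib_card_upper {k l x : ℕ} (hk : 0 < k) (hx1 : 1 ≤ x) :
    (fib k l x).card ≤ (l + k - 1) / k := by
  rw [fib, Nat.card_Ioc]
  have hxl : x * l = (x - 1) * l + l := by
    rw [Nat.sub_mul, one_mul]; have := Nat.le_mul_of_pos_left l hx1; omega
  rw [hxl]
  set a := (x - 1) * l
  have key : (a + l) / k ≤ a / k + (l + k - 1) / k := by
    have h2 := Nat.div_add_mod a k
    have h3 : a % k < k := Nat.mod_lt _ hk
    calc (a + l) / k = (k * (a / k) + (a % k + l)) / k := by rw [← add_assoc, h2]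
      _ = a / k + (a % k + l) / k := Nat.mul_add_div hk _ _
      _ ≤ a / k + (l + k - 1) / k :=
          Nat.add_le_add_left (Nat.div_le_div_right (by omega)) _
  exact Nat.sub_le_iff_le_add.mpr (by linarith)

lemma block_eq_piFinset {k l n : ℕ} (hk : 0 < k) (hl : k < l) (x : Fin n → ℕ)
    (hx : x ∈ gridPts k n) :
    block k l n x = ↑(Fintype.piFinset fun i => fib k l (x i)) := by
  ext y
  simp only [block, gridPts, Set.mem_setOf_eq, Finset.coe_sort_coe, Finset.mem_coe,
    Fintype.mem_piFinset]
  constructor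
  · rintro ⟨h1, h2⟩ i
    have hxi := hx i
    rw [Finset.mem_Icc] at hxi
    exact (mem_fib_iff hk hl hxi.1 hxi.2 _).mpr ⟨h1 i, h2 i⟩
  · intro h
    constructor
    · intro i
      have hxi := hx i
      rw [Finset.mem_Icc] at hxi
      exact ((mem_fib_iff hk hl hxi.1 hxi.2 _).mp (h i)).1
    · intro i
      have hxi := hx i
      rw [Finset.mem_Icc] at hxi
      exact ((mem_fib_iff hk hl hxi.1 hxi.2 _).mp (h i)).2

lemma block_ncard_bounds {k l n : ℕ} (hk : 0 < k) (hl : k < l) (x : Fin n → ℕ)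
    (hx : x ∈ gridPts k n) :
    (l / k) ^ n ≤ (block k l n x).ncard ∧ (block k l n x).ncard ≤ ((l + k - 1) / k) ^ n := by
  rw [block_eq_piFinset hk hl x hx, Set.ncard_coe_finset, Fintype.card_piFinset]
  constructor
  · calc (l / k) ^ n = (l / k) ^ (Finset.univ : Finset (Fin n)).card := by
          rw [Finset.card_univ, Fintype.card_fin]
      _ ≤ ∏ i, (fib k l (x i)).card := Finset.pow_card_le_prod _ _ _ (fun i _ => by
          have hxi := hx i; rw [Finset.mem_Icc] at hxi
          exact fib_card_lower hk hxi.1)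
  · calc ∏ i, (fib k l (x i)).card
        ≤ ((l + k - 1) / k) ^ (Finset.univ : Finset (Fin n)).card :=
          Finset.prod_le_pow_card _ _ _ (fun i _ => by
            have hxi := hx i; rw [Finset.mem_Icc] at hxi
            exact fib_card_upper hk hxi.1)
      _ = ((l + k - 1) / k) ^ n := by rw [Finset.card_univ, Fintype.card_fin]

/-- The projection `[l]^n → [k]^n`. -/
def proj (k l : ℕ) {n : ℕ} (y : Fin n → ℕ) : Fin n → ℕ := fun i => (y i * k + l - 1) / l

lemma ceil_mono {k l : ℕ} {m m' : ℕ} (h : m ≤ m') :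
    (m * k + l - 1) / l ≤ (m' * k + l - 1) / l :=
  Nat.div_le_div_right (by have := Nat.mul_le_mul_right k h; omega)

lemma ceil_step {k l m : ℕ} (hl : 0 < l) (hkl : k ≤ l) :
    ((m + 1) * k + l - 1) / l ≤ (m * k + l - 1) / l + 1 := by
  have h : (m + 1) * k + l - 1 ≤ (m * k + l - 1) + l := by
    rw [add_mul, one_mul]; omega
  calc ((m + 1) * k + l - 1) / l ≤ ((m * k + l - 1) + l) / l := Nat.div_le_div_right h
    _ = (m * k + l - 1) / l + 1 := Nat.add_div_right _ hl

lemma gridPts_finite (m n : ℕ) : (gridPts m n).Finite := by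
  have h : gridPts m n = ↑(Fintype.piFinset fun _ : Fin n => Finset.Icc 1 m) := by
    ext y
    constructor
    · intro hy; rw [Finset.mem_coe, Fintype.mem_piFinset]; exact hy
    · intro hy; rw [Finset.mem_coe, Fintype.mem_piFinset] at hy; exact hy
  rw [h]; exact Finset.finite_toSet _

lemma proj_mem_grid {k l n : ℕ} (hk : 0 < k) (hkl : k < l) {y : Fin n → ℕ}
    (hy : y ∈ gridPts l n) : proj k l y ∈ gridPts k n := by
  intro i
  have hl0 : 0 < l := lt_trans hk hkl
  have hyi := hy i; rw [Finset.mem_Icc] at hyi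
  rw [Finset.mem_Icc]
  constructor
  · rw [proj, Nat.one_le_div_iff hl0]
    have : 0 < y i * k := Nat.mul_pos (by omega) hk
    omega
  · have h5 : (y i * k + l - 1) / l < k + 1 := by
      rw [Nat.div_lt_iff_lt_mul hl0, add_mul, one_mul]
      have h6 : y i * k ≤ l * k := Nat.mul_le_mul_right k hyi.2
      have h7 : l * k = k * l := mul_comm l k
      omega
    exact Nat.lt_succ_iff.mp h5

lemma mem_Union_block {k l n : ℕ} {A : Set (Fin n → ℕ)} (y : Fin n → ℕ) :
    y ∈ ⋃ x ∈ A, block k l n x ↔ y ∈ gridPts l n ∧ proj k l y ∈ A := by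
  simp only [Set.mem_iUnion, exists_prop]
  constructor
  · rintro ⟨x, hxA, hyg, hycoord⟩
    have hpx : proj k l y = x := funext hycoord
    exact ⟨hyg, hpx ▸ hxA⟩
  · rintro ⟨hyg, hAy⟩
    exact ⟨proj k l y, hAy, hyg, fun i => rfl⟩

/-- Key counting estimate: the boundary of the blown-up set is at most `⌈l/k⌉^{n-1}` times
the boundary of `A`. -/
lemma boundary_le {k l n : ℕ} (hk : 2 ≤ k) (hl : k < l)
    {A : Set (Fin n → ℕ)} (hA : A ⊆ gridPts k n) :
    gridBoundary l n (⋃ x ∈ A, block k l n x) ≤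
      ((l + k - 1) / k) ^ (n - 1) * gridBoundary k n A := by
  classical
  have hk0 : 0 < k := by omega
  have hl0 : 0 < l := by omega
  set Ab := ⋃ x ∈ A, block k l n x with hAb
  set C := (l + k - 1) / k with hC
  set S : Set ((Fin n → ℕ) × (Fin n → ℕ)) :=
    {p | p.1 ∈ Ab ∧ p.2 ∉ Ab ∧ p.2 ∈ gridPts l n ∧ gridAdj n p.1 p.2} with hS
  set T : Set ((Fin n → ℕ) × (Fin n → ℕ)) :=
    {p | p.1 ∈ A ∧ p.2 ∉ A ∧ p.2 ∈ gridPts k n ∧ gridAdj n p.1 p.2} with hT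
  have hSsub : S ⊆ (gridPts l n) ×ˢ (gridPts l n) := by
    rintro ⟨y, y'⟩ ⟨h1, h2, h3, h4⟩
    exact ⟨((mem_Union_block y).mp h1).1, h3⟩
  have hTsub : T ⊆ (gridPts k n) ×ˢ (gridPts k n) := by
    rintro ⟨y, y'⟩ ⟨h1, h2, h3, h4⟩
    exact ⟨hA h1, h3⟩
  have hSfin : S.Finite :=
    Set.Finite.subset ((gridPts_finite l n).prod (gridPts_finite l n)) hSsub
  have hTfin : T.Finite :=
    Set.Finite.subset ((gridPts_finite k n).prod (gridPts_finite k n)) hTsub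
  have hgbS : gridBoundary l n Ab = hSfin.toFinset.card := by
    rw [gridBoundary, ← Set.ncard_coe_finset, Set.Finite.coe_toFinset]
  have hgbT : gridBoundary k n A = hTfin.toFinset.card := by
    rw [gridBoundary, ← Set.ncard_coe_finset, Set.Finite.coe_toFinset]
  set F : (Fin n → ℕ) × (Fin n → ℕ) → (Fin n → ℕ) × (Fin n → ℕ) :=
    fun p => (proj k l p.1, proj k l p.2) with hF
  -- the projection maps boundary edges to boundary edges
  have hmem : ∀ p ∈ S, F p ∈ T := by
    rintro ⟨y, y'⟩ ⟨h1, h2, h3, ⟨j, hdir, hoff⟩⟩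
    dsimp only at h1 h2 h3 hdir hoff
    have hy := (mem_Union_block y).mp h1
    have hy' : proj k l y' ∉ A := fun hc => h2 ((mem_Union_block y').mpr ⟨h3, hc⟩)
    refine ⟨hy.2, hy', proj_mem_grid hk0 hl h3, ?_⟩
    have hne : proj k l y ≠ proj k l y' := fun hc => hy' (hc ▸ hy.2)
    show gridAdj n (proj k l y) (proj k l y')
    refine ⟨j, ?_, fun i hi => by simp only [proj]; rw [hoff i hi]⟩
    have hne' : proj k l y j ≠ proj k l y' j := by
      intro hc
      apply hne
      funext i
      by_cases hij : i = j
      · rw [hij]; exact hc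
      · simp only [proj]; rw [hoff i hij]
    rcases hdir with h5 | h5
    · -- y j = y' j + 1
      have ha : proj k l y' j ≤ proj k l y j := ceil_mono (by omega)
      have hb : proj k l y j ≤ proj k l y' j + 1 := by
        show (y j * k + l - 1) / l ≤ (y' j * k + l - 1) / l + 1
        rw [h5]; exact ceil_step hl0 (le_of_lt hl)
      exact Or.inl (le_antisymm hb (Nat.succ_le_of_lt (lt_of_le_of_ne ha (Ne.symm hne'))))
    · have ha : proj k l y j ≤ proj k l y' j := ceil_mono (by omega)
      have hb : proj k l y' j ≤ proj k l y j + 1 := by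
        show (y' j * k + l - 1) / l ≤ (y j * k + l - 1) / l + 1
        rw [h5]; exact ceil_step hl0 (le_of_lt hl)
      exact Or.inr (le_antisymm hb (Nat.succ_le_of_lt (lt_of_le_of_ne ha hne')))
  rw [hgbS, hgbT]
  have hfiber : ∀ b ∈ hSfin.toFinset.image F,
      (hSfin.toFinset.filter (fun p => F p = b)).card ≤ C ^ (n - 1) := by
    intro b hb
    obtain ⟨p₀, hp₀, hFp₀⟩ := Finset.mem_image.mp hb
    have hbT : b ∈ T := hFp₀ ▸ hmem p₀ (hSfin.mem_toFinset.mp hp₀)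
    obtain ⟨hb1, hb2, hb3, j, hdir, hoff⟩ := hbT
    have hb1g : b.1 ∈ gridPts k n := hA hb1
    have hbj : b.1 j ≠ b.2 j := by rcases hdir with h | h <;> omega
    set d : ℕ := if b.2 j = b.1 j + 1 then b.1 j * l / k else b.2 j * l / k + 1 with hd
    -- structure of the fiber
    have key : ∀ p ∈ hSfin.toFinset.filter (fun p => F p = b),
        (∀ i, i ≠ j → p.2 i = p.1 i) ∧ (∀ i, p.1 i ∈ fib k l (b.1 i)) ∧ p.1 j = d ∧
          p.2 j = (if b.2 j = b.1 j + 1 then p.1 j + 1 else p.1 j - 1) := by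
      rintro ⟨y, y'⟩ hp
      rw [Finset.mem_filter, Set.Finite.mem_toFinset] at hp
      obtain ⟨⟨h1, h2, h3, ⟨j₀, hdir₀, hoff₀⟩⟩, hFb⟩ := hp
      dsimp only at h1 h2 h3 hdir₀ hoff₀
      have hπ1 : proj k l y = b.1 := congrArg Prod.fst hFb
      have hπ2 : proj k l y' = b.2 := congrArg Prod.snd hFb
      have hyg : y ∈ gridPts l n := ((mem_Union_block y).mp h1).1
      have hj₀ : j₀ = j := by
        by_contra hne
        apply hbj
        have heq : y j = y' j := hoff₀ j (fun h => hne h.symm)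
        rw [← hπ1, ← hπ2]
        simp only [proj]
        rw [heq]
      subst hj₀
      have hcoord : ∀ i, y i ∈ fib k l (b.1 i) := by
        intro i
        have hbi := hb1g i; rw [Finset.mem_Icc] at hbi
        refine (mem_fib_iff hk0 hl hbi.1 hbi.2 _).mpr ⟨hyg i, ?_⟩
        rw [← hπ1]; rfl
      have hcoord' : ∀ i, y' i ∈ fib k l (b.2 i) := by
        intro i
        have hbi := hb3 i; rw [Finset.mem_Icc] at hbi
        refine (mem_fib_iff hk0 hl hbi.1 hbi.2 _).mpr ⟨h3 i, ?_⟩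
        rw [← hπ2]; rfl
      dsimp only
      refine ⟨fun i hi => (hoff₀ i hi).symm, hcoord, ?_⟩
      have hcj := hcoord j₀
      have hcj' := hcoord' j₀
      rw [fib, Finset.mem_Ioc] at hcj hcj'
      rcases hdir with hcase | hcase
      · -- b.1 j₀ = b.2 j₀ + 1 : going down
        have hyj : y j₀ = y' j₀ + 1 := by
          rcases hdir₀ with h5 | h5
          · exact h5
          · exfalso
            have ha : proj k l y j₀ ≤ proj k l y' j₀ := ceil_mono (by omega)
            rw [hπ1, hπ2] at ha
            omega
        have hlb : b.2 j₀ * l / k < y j₀ := by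
          have h7 : (b.1 j₀ - 1) = b.2 j₀ := by omega
          rw [← h7]; exact hcj.1
        have hub : y j₀ ≤ b.2 j₀ * l / k + 1 := by
          rw [hyj]; exact Nat.add_le_add_right hcj'.2 1
        have hval : y j₀ = d := by
          rw [hd, if_neg (by omega)]
          exact le_antisymm hub (Nat.succ_le_of_lt hlb)
        refine ⟨hval, ?_⟩
        rw [if_neg (by omega)]
        omega
      · -- b.2 j₀ = b.1 j₀ + 1 : going up
        have hyj : y' j₀ = y j₀ + 1 := by
          rcases hdir₀ with h5 | h5
          · exfalso
            have ha : proj k l y' j₀ ≤ proj k l y j₀ := ceil_mono (by omega)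
            rw [hπ1, hπ2] at ha
            omega
          · exact h5
        have hub : y j₀ ≤ b.1 j₀ * l / k := hcj.2
        have hlb : b.1 j₀ * l / k ≤ y j₀ := by
          have h7 : (b.2 j₀ - 1) = b.1 j₀ := by omega
          have h8 := hcj'.1
          rw [h7, hyj] at h8
          exact Nat.lt_succ_iff.mp h8
        have hval : y j₀ = d := by
          rw [hd, if_pos hcase]
          exact le_antisymm hub hlb
        refine ⟨hval, ?_⟩
        rw [if_pos hcase]
        exact hyj
    -- bound the fiber via an injection into a product set
    have hmap : ∀ p ∈ hSfin.toFinset.filter (fun p => F p = b),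
        p.1 ∈ Fintype.piFinset (fun i => if i = j then ({d} : Finset ℕ) else fib k l (b.1 i)) := by
      intro p hp
      obtain ⟨k1, k2, k3, k4⟩ := key p hp
      rw [Fintype.mem_piFinset]
      intro i
      by_cases hij : i = j
      · subst hij; simp [k3]
      · simp [hij, k2 i]
    have hinj : Set.InjOn (fun p : (Fin n → ℕ) × (Fin n → ℕ) => p.1)
        ↑(hSfin.toFinset.filter (fun p => F p = b)) := by
      intro p hp q hq h1
      dsimp only at h1
      rw [Finset.mem_coe] at hp hq
      obtain ⟨k1, k2, k3, k4⟩ := key p hp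
      obtain ⟨m1, m2, m3, m4⟩ := key q hq
      have h2 : p.2 = q.2 := by
        funext i
        by_cases hij : i = j
        · subst hij; rw [k4, m4, h1]
        · rw [k1 i hij, m1 i hij, h1]
      exact Prod.ext h1 h2
    calc (hSfin.toFinset.filter (fun p => F p = b)).card
        ≤ (Fintype.piFinset
            (fun i => if i = j then ({d} : Finset ℕ) else fib k l (b.1 i))).card :=
          Finset.card_le_card_of_injOn _ hmap hinj
      _ = ∏ i, (if i = j then ({d} : Finset ℕ) else fib k l (b.1 i)).card :=
          Fintype.card_piFinset _
      _ ≤ C ^ (n - 1) := by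
          rw [← Finset.prod_erase (f := fun i : Fin n =>
              (if i = j then ({d} : Finset ℕ) else fib k l (b.1 i)).card) (a := j) Finset.univ
            (by simp)]
          calc ∏ i ∈ Finset.univ.erase j,
                (if i = j then ({d} : Finset ℕ) else fib k l (b.1 i)).card
              ≤ C ^ (Finset.univ.erase j).card := by
                refine Finset.prod_le_pow_card _ _ _ (fun i hi => ?_)
                rw [if_neg (Finset.ne_of_mem_erase hi)]
                have hbi := hb1g i; rw [Finset.mem_Icc] at hbi
                exact fib_card_upper hk0 hbi.1
            _ = C ^ (n - 1) := by
                rw [Finset.card_erase_of_mem (Finset.mem_univ j), Finset.card_univ,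
                  Fintype.card_fin]
  calc hSfin.toFinset.card ≤ C ^ (n - 1) * (hSfin.toFinset.image F).card :=
        Finset.card_le_mul_card_image _ _ hfiber
    _ ≤ C ^ (n - 1) * hTfin.toFinset.card := by
        refine Nat.mul_le_mul_left _ (Finset.card_le_card ?_)
        intro b hb
        obtain ⟨p, hp, rfl⟩ := Finset.mem_image.mp hb
        exact hTfin.mem_toFinset.mpr (hmem p (hSfin.mem_toFinset.mp hp))

/-- With `k ≥ 2`, `l > k`, `(1 + k/(l-k))^n ≤ 2`: every block satisfies
`⌊l/k⌋^n ≤ |R_x| ≤ ⌈l/k⌉^n`, and for `A ⊆ [k]^n` with `Ă = ∪_{x∈A} R_x`,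
`|∂Ă|/l^{n-1} ≤ 2|∂A|/k^{n-1}`. -/
theorem stmt18 (k l n : ℕ) (hn : 0 < n) (hk : 2 ≤ k) (hl : k < l)
    (hcond : (1 + (k : ℝ) / ((l : ℝ) - k)) ^ n ≤ 2)
    (A : Set (Fin n → ℕ)) (hA : A ⊆ gridPts k n) :
    (∀ x ∈ gridPts k n,
        (l / k) ^ n ≤ (block k l n x).ncard ∧ (block k l n x).ncard ≤ ((l + k - 1) / k) ^ n)
      ∧ (gridBoundary l n (⋃ x ∈ A, block k l n x) : ℝ) / (l : ℝ) ^ (n - 1) ≤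
          2 * (gridBoundary k n A : ℝ) / (k : ℝ) ^ (n - 1) := by
  have hk0 : (0:ℕ) < k := by omega
  refine ⟨fun x hx => block_ncard_bounds hk0 hl x hx, ?_⟩
  have hcount := boundary_le hk hl hA
  set C := (l + k - 1) / k with hC
  set S := gridBoundary l n (⋃ x ∈ A, block k l n x) with hS
  set T := gridBoundary k n A with hT
  have hkR : (0:ℝ) < (k:ℝ) := by positivity
  have hlR : (0:ℝ) < (l:ℝ) := by exact_mod_cast (by omega : (0:ℕ) < l)
  have hlkR : (0:ℝ) < (l:ℝ) - (k:ℝ) := by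
    have : (k:ℝ) < (l:ℝ) := by exact_mod_cast hl
    linarith
  rw [div_le_div_iff₀ (by positivity) (by positivity)]
  -- key numeric estimate : (C*k)^(n-1) ≤ 2 * l^(n-1)
  have hCk : (C:ℝ) * k ≤ (l:ℝ) + k - 1 := by
    have h1 : C * k ≤ l + k - 1 := Nat.div_mul_le_self (l + k - 1) k
    have h2 : ((C * k : ℕ) : ℝ) ≤ ((l + k - 1 : ℕ) : ℝ) := Nat.cast_le.mpr h1
    have h3 : ((l + k - 1 : ℕ) : ℝ) = (l:ℝ) + k - 1 := by
      have : (1:ℕ) ≤ l + k := by omega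
      push_cast [Nat.cast_sub this]
      ring
    rw [h3] at h2
    calc (C:ℝ) * k = ((C * k : ℕ) : ℝ) := by push_cast; ring
      _ ≤ (l:ℝ) + k - 1 := h2
  set t : ℝ := 1 + (k : ℝ) / ((l : ℝ) - k) with ht
  have ht1 : (1:ℝ) ≤ t := by
    rw [ht]
    have : (0:ℝ) ≤ (k:ℝ) / ((l:ℝ) - k) := div_nonneg (by positivity) (le_of_lt hlkR)
    linarith
  have htl : (l:ℝ) + k - 1 ≤ t * l := by
    have ht' : t = (l:ℝ) / ((l:ℝ) - k) := by
      rw [ht]; field_simp; ring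
    rw [ht', div_mul_eq_mul_div, le_div_iff₀ hlkR]
    have hk2 : (2:ℝ) ≤ (k:ℝ) := by exact_mod_cast hk
    nlinarith
  have hpow : ((C:ℝ) * k) ^ (n - 1) ≤ 2 * (l:ℝ) ^ (n - 1) := by
    have h1 : ((C:ℝ) * k) ^ (n - 1) ≤ (t * l) ^ (n - 1) := by
      refine pow_le_pow_left₀ (by positivity) ?_ _
      exact le_trans hCk htl
    have h2 : (t * l) ^ (n - 1) = t ^ (n - 1) * (l:ℝ) ^ (n - 1) := mul_pow _ _ _
    have h3 : t ^ (n - 1) ≤ t ^ n := pow_le_pow_right₀ ht1 (by omega)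
    have h4 : t ^ n ≤ 2 := hcond
    calc ((C:ℝ) * k) ^ (n - 1) ≤ t ^ (n - 1) * (l:ℝ) ^ (n - 1) := h2 ▸ h1
      _ ≤ t ^ n * (l:ℝ) ^ (n - 1) := by
          exact mul_le_mul_of_nonneg_right h3 (by positivity)
      _ ≤ 2 * (l:ℝ) ^ (n - 1) := mul_le_mul_of_nonneg_right h4 (by positivity)
  have hScast : (S:ℝ) ≤ (C:ℝ) ^ (n - 1) * T := by exact_mod_cast hcount
  calc (S:ℝ) * (k:ℝ) ^ (n - 1) ≤ ((C:ℝ) ^ (n - 1) * T) * (k:ℝ) ^ (n - 1) := by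
        exact mul_le_mul_of_nonneg_right hScast (by positivity)
    _ = (T:ℝ) * (((C:ℝ) * k) ^ (n - 1)) := by rw [mul_pow]; ring
    _ ≤ (T:ℝ) * (2 * (l:ℝ) ^ (n - 1)) := by
        exact mul_le_mul_of_nonneg_left hpow (by positivity)
    _ = 2 * (T:ℝ) * (l:ℝ) ^ (n - 1) := by ring
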